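/- Let X ∈ ℝ^{M×N} with all entries nonnegative, H ∈ ℝ^{K×N} with all entries positive, and S^t ∈ ℝ^{M×K} with all entries positive. Define ξ_{ijl} = S^t_{il} H_{lj} / (S^t H)_{ij} and f₁(S, S^t) = Σ_{i,j,l} ξ_{ijl} (X_{ij} − S_{il} H_{lj} / ξ_{ijl})². Then for every S ∈ ℝ^{M×K} with nonnegative entries, f₁(S, S^t) ≥ Σ_{i,j} (X_{ij} − (SH)_{ij})², and f₁(S^t, S^t) = Σ_{i,j} (X_{ij} − (S^t H)_{ij})². That is, f₁(·, S^t) is an auxiliary function for the NMF objective F₁(S) = Σ_{i,j} (X_{ij} − (SH)_{ij})². -/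

import Mathlib

open Finset Matrix

lemma jensen_aux {K : ℕ} (ξ b : Fin K → ℝ) (hξ : ∀ l, 0 < ξ l)
    (hsum : ∑ l, ξ l = 1) (x : ℝ) :
    (x - ∑ l, b l) ^ 2 ≤ ∑ l, ξ l * (x - b l / ξ l) ^ 2 := by
  have h1 : ∀ l, ξ l * (x - b l / ξ l) ^ 2 = (ξ l * x - b l) ^ 2 / ξ l := by
    intro l
    have h := (hξ l).ne'
    field_simp
  have h2 : x - ∑ l, b l = ∑ l, (ξ l * x - b l) := by
    rw [Finset.sum_sub_distrib, ← Finset.sum_mul, hsum, one_mul]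
  rw [h2]
  calc (∑ l, (ξ l * x - b l)) ^ 2
      = (∑ l, (ξ l * x - b l)) ^ 2 / ∑ l, ξ l := by rw [hsum, div_one]
    _ ≤ ∑ l, (ξ l * x - b l) ^ 2 / ξ l :=
        Finset.sq_sum_div_le_sum_sq_div _ _ (fun l _ => hξ l)
    _ = ∑ l, ξ l * (x - b l / ξ l) ^ 2 := by simp_rw [h1]

/-- `f₁(·, Sᵗ)` built from `ξ i j l = Sᵗ i l * H l j / (Sᵗ * H) i j` is an auxiliary
function for the NMF objective `F₁ S = ∑ i j, (X i j - (S * H) i j)²`: it dominates `F₁`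
on nonnegative matrices and agrees with `F₁` at `S = Sᵗ`. -/
theorem nmf_auxiliary_function {M N K : ℕ} (hK : 0 < K)
    (X : Matrix (Fin M) (Fin N) ℝ) (hX : ∀ i j, 0 ≤ X i j)
    (H : Matrix (Fin K) (Fin N) ℝ) (hH : ∀ l j, 0 < H l j)
    (St : Matrix (Fin M) (Fin K) ℝ) (hSt : ∀ i l, 0 < St i l) :
    (∀ S : Matrix (Fin M) (Fin K) ℝ, (∀ i l, 0 ≤ S i l) →
      ∑ i, ∑ j, (X i j - (S * H) i j) ^ 2 ≤
        ∑ i, ∑ j, ∑ l, (St i l * H l j / (St * H) i j) *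
          (X i j - S i l * H l j / (St i l * H l j / (St * H) i j)) ^ 2) ∧
    (∑ i, ∑ j, ∑ l, (St i l * H l j / (St * H) i j) *
        (X i j - St i l * H l j / (St i l * H l j / (St * H) i j)) ^ 2 =
      ∑ i, ∑ j, (X i j - (St * H) i j) ^ 2) := by
  have hP : ∀ i j, 0 < (St * H) i j := by
    intro i j
    rw [Matrix.mul_apply]
    exact Finset.sum_pos (fun l _ => mul_pos (hSt i l) (hH l j)) (Finset.univ_nonempty_iff.2 (Fin.pos_iff_nonempty.1 hK))
  have hξpos : ∀ i j l, 0 < St i l * H l j / (St * H) i j :=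
    fun i j l => div_pos (mul_pos (hSt i l) (hH l j)) (hP i j)
  have hξsum : ∀ i j, ∑ l, St i l * H l j / (St * H) i j = 1 := by
    intro i j
    rw [← Finset.sum_div, ← Matrix.mul_apply, div_self (hP i j).ne']
  constructor
  · intro S hS
    refine Finset.sum_le_sum fun i _ => Finset.sum_le_sum fun j _ => ?_
    have := jensen_aux (fun l => St i l * H l j / (St * H) i j)
      (fun l => S i l * H l j) (hξpos i j) (hξsum i j) (X i j)
    rwa [← Matrix.mul_apply] at this
  · refine Finset.sum_congr rfl fun i _ => Finset.sum_congr rfl fun j _ => ?_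
    have key : ∀ l : Fin K,
        St i l * H l j / (St i l * H l j / (St * H) i j) = (St * H) i j := by
      intro l
      have ha := (mul_pos (hSt i l) (hH l j)).ne'
      have hp := (hP i j).ne'
      field_simp
      exact div_self ha
    simp_rw [key, ← Finset.sum_mul, hξsum, one_mul]
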